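/- Let X be a T1 space with the direct limit topology of an increasing sequence of closed subspaces X₁ ⊆ X₂ ⊆ ⋯, and let K be a compact topological space. Then the natural map colimₙ C(K, Xₙ) → C(K, X) on sets of continuous maps is a bijection. -/

import Mathlib

/-- The canonical map from the disjoint union of the `C(K, Xₙ)` to `C(K, X)`,
given by composing with the inclusion `Xₙ ⊆ X`. -/
def stageToMap {X : Type*} [TopologicalSpace X] (F : ℕ → Set X) {K : Type*}
    [TopologicalSpace K] (p : Σ n : ℕ, C(K, F n)) : C(K, X) :=
  ⟨fun k => (p.2 k : X), continuous_subtype_val.comp p.2.continuous⟩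

/-- For a T1 space `X` with the direct limit topology of an increasing sequence of closed
subspaces `Xₙ`, and a compact space `K`, the natural map `colimₙ C(K, Xₙ) → C(K, X)` is a
bijection.  We express this by saying that the map from the disjoint union of the stages is
surjective, and that two stages have the same image iff they are identified in the colimit
(i.e. they agree after inclusion into a common later stage). -/
theorem colim_continuousMaps_bijection
    {X : Type*} [TopologicalSpace X] [T1Space X]
    (F : ℕ → Set X) (hmono : Monotone F) (hunion : (⋃ n, F n) = Set.univ)
    (hclosed : ∀ n, IsClosed (F n))
    (hlim : ∀ C : Set X, (∀ n, IsClosed ((Subtype.val ⁻¹' C : Set (F n)))) → IsClosed C)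
    (K : Type*) [TopologicalSpace K] [CompactSpace K] :
    Function.Surjective (stageToMap (K := K) F) ∧
      ∀ p q : Σ n : ℕ, C(K, F n),
        stageToMap F p = stageToMap F q ↔
          ∃ (m : ℕ) (h1 : p.1 ≤ m) (h2 : q.1 ≤ m),
            ∀ k : K, (Set.inclusion (hmono h1) (p.2 k) : F m) =
              Set.inclusion (hmono h2) (q.2 k) := by
  -- Key lemma: every compact subset of `X` lies in some stage `F n`.
  have key : ∀ S : Set X, IsCompact S → ∃ n, S ⊆ F n := by
    intro S hS
    by_contra h
    push_neg at h
    simp only [Set.not_subset] at h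
    choose x hxS hxF using h
    set R : Set X := Set.range x with hR
    -- every subset of `R` is closed, since it meets each `F m` in a finite set
    have hsub : ∀ A : Set X, A ⊆ R → IsClosed A := by
      intro A hA
      apply hlim
      intro m
      have hfin : (Subtype.val ⁻¹' A : Set (F m)).Finite := by
        have : (Subtype.val ⁻¹' A : Set (F m)) ⊆
            Subtype.val ⁻¹' (x '' {k | k < m}) := by
          rintro ⟨y, hy⟩ hyA
          obtain ⟨k, rfl⟩ := hA hyA
          have hkm : k < m := by
            by_contra hkm
            exact hxF k (hmono (le_of_not_gt hkm) hy)
          exact ⟨k, hkm, rfl⟩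
        exact Set.Finite.subset (((Set.finite_Iio m).image x).preimage
          Subtype.val_injective.injOn) this
      exact hfin.isClosed
    -- so `R` with the subspace topology is discrete
    have hRclosed : IsClosed R := hsub R le_rfl
    have hdisc : DiscreteTopology R := by
      rw [discreteTopology_iff_forall_isClosed]
      intro t
      have : IsClosed (Subtype.val '' t : Set X) :=
        hsub _ (by rintro y ⟨⟨z, hz⟩, _, rfl⟩; exact hz)
      have := this.preimage (continuous_subtype_val : Continuous ((↑) : R → X))
      rwa [Set.preimage_image_eq t Subtype.val_injective] at this
    -- `R` is compact (closed subset of the compact `S`), discrete, hence finite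
    have hRcomp : IsCompact R := hS.of_isClosed_subset hRclosed
      (Set.range_subset_iff.mpr hxS)
    have hRfin : R.Finite := by
      have : CompactSpace R := isCompact_iff_compactSpace.mp hRcomp
      have : Finite R := Finite.of_finite_univ isCompact_univ.finite_of_discrete
      exact Set.toFinite R
    -- but each value of `x` is attained only finitely often, so `R` is infinite
    have hfib : ∀ y : X, (x ⁻¹' {y}).Finite := by
      intro y
      obtain ⟨m, hm⟩ : ∃ m, y ∈ F m := by
        have : y ∈ ⋃ n, F n := hunion ▸ Set.mem_univ y
        exact Set.mem_iUnion.mp this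
      apply Set.Finite.subset (Set.finite_Iio m)
      intro k hk
      simp only [Set.mem_preimage, Set.mem_singleton_iff] at hk
      by_contra hkm
      exact hxF k (hmono (le_of_not_gt hkm) (hk ▸ hm))
    have : (Set.univ : Set ℕ).Finite := by
      have : (Set.univ : Set ℕ) ⊆ ⋃ y ∈ R, x ⁻¹' {y} := by
        intro k _
        exact Set.mem_biUnion (Set.mem_range_self k) rfl
      exact Set.Finite.subset (hRfin.biUnion fun y _ => hfib y) this
    exact Set.infinite_univ this
  constructor
  · -- surjectivity
    intro f
    obtain ⟨n, hn⟩ := key (Set.range f) (isCompact_range f.continuous)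
    refine ⟨⟨n, ⟨fun k => ⟨f k, hn (Set.mem_range_self k)⟩,
      f.continuous.subtype_mk _⟩⟩, ?_⟩
    ext k
    rfl
  · -- injectivity up to the colimit identification
    intro p q
    constructor
    · intro hpq
      refine ⟨max p.1 q.1, le_max_left _ _, le_max_right _ _, fun k => ?_⟩
      have : (p.2 k : X) = (q.2 k : X) :=
        congrArg (fun f : C(K, X) => f k) hpq
      exact Subtype.ext this
    · rintro ⟨m, h1, h2, h⟩
      ext k
      have := congrArg (Subtype.val : F m → X) (h k)
      simpa [stageToMap] using this
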